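/- Let G be a non-trivial finite group and let g ∈ G be a non-identity element. Then g is an isolated vertex of the graph P_E(G) − P(G) (equivalently, g is not a vertex of D(G)) if and only if either ⟨g⟩ is a maximal cyclic subgroup of G, or every cyclic subgroup of G containing g has prime-power order. -/

import Mathlib

/-- Adjacency in the power graph `P(G)`: distinct `a`, `b` are adjacent iff one is a
power of the other. -/
def powAdj {G : Type*} [Group G] (a b : G) : Prop :=
  a ≠ b ∧ (a ∈ Subgroup.zpowers b ∨ b ∈ Subgroup.zpowers a)

/-- Adjacency in the enhanced power graph `P_E(G)`: distinct `a`, `b` are adjacent iff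
both are powers of a common element `c`. -/
def enhAdj {G : Type*} [Group G] (a b : G) : Prop :=
  a ≠ b ∧ ∃ c : G, a ∈ Subgroup.zpowers c ∧ b ∈ Subgroup.zpowers c

/-- Adjacency in the difference graph `D(G) = P_E(G) − P(G)`: adjacent in the enhanced
power graph but not in the power graph. -/
def diffAdj {G : Type*} [Group G] (a b : G) : Prop :=
  enhAdj a b ∧ ¬ powAdj a b

/-- A subgroup `H` of `G` is a maximal cyclic subgroup if it is cyclic and is not
properly contained in any cyclic subgroup of `G` other than itself. -/
def IsMaximalCyclic {G : Type*} [Group G] (H : Subgroup G) : Prop :=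
  IsCyclic H ∧ ∀ K : Subgroup G, IsCyclic K → H ≤ K → H = K

section aux

set_option linter.unusedSectionVars false

variable {G : Type*} [Group G] [Finite G]

lemma isCyclic_zpowers (g : G) : IsCyclic (Subgroup.zpowers g) := by
  refine ⟨⟨⟨g, Subgroup.mem_zpowers g⟩, ?_⟩⟩
  rintro ⟨x, m, rfl⟩
  exact ⟨m, by ext; simp⟩

lemma zpowers_of_isCyclic (K : Subgroup G) (hK : IsCyclic K) :
    ∃ k : G, k ∈ K ∧ K = Subgroup.zpowers k := by
  obtain ⟨⟨k, hkK⟩, hgen⟩ := hK.exists_generator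
  refine ⟨k, hkK, le_antisymm ?_ (Subgroup.zpowers_le.mpr hkK)⟩
  intro x hx
  obtain ⟨m, hm⟩ := hgen ⟨x, hx⟩
  exact ⟨m, congrArg Subtype.val hm⟩

lemma mem_zpowers_of_orderOf_dvd {c a b : G} (ha : a ∈ Subgroup.zpowers c)
    (hb : b ∈ Subgroup.zpowers c) (hd : orderOf a ∣ orderOf b) :
    a ∈ Subgroup.zpowers b := by
  obtain ⟨i, rfl⟩ := mem_powers_iff_mem_zpowers.mpr ha
  obtain ⟨j, rfl⟩ := mem_powers_iff_mem_zpowers.mpr hb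
  set n := orderOf c with hn
  have hn0 : 0 < n := (isOfFinOrder_of_finite c).orderOf_pos
  rw [orderOf_pow c, orderOf_pow c, ← hn] at hd
  -- hd : n / gcd n i ∣ n / gcd n j
  have hdi : Nat.gcd n i ∣ n := Nat.gcd_dvd_left n i
  have hdj : Nat.gcd n j ∣ n := Nat.gcd_dvd_left n j
  have hji : Nat.gcd n j ∣ Nat.gcd n i := by
    obtain ⟨u, hu⟩ := hd
    have hsi : Nat.gcd n i * (n / Nat.gcd n i) = n := Nat.mul_div_cancel' hdi
    have hsj : Nat.gcd n j * (n / Nat.gcd n j) = n := Nat.mul_div_cancel' hdj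
    have hsipos : 0 < n / Nat.gcd n i :=
      Nat.div_pos (Nat.le_of_dvd hn0 hdi) (Nat.pos_of_ne_zero (by
        intro hcon; rw [hcon, Nat.zero_mul] at hsi; omega))
    refine ⟨u, ?_⟩
    have key : (Nat.gcd n j * u) * (n / Nat.gcd n i) = Nat.gcd n i * (n / Nat.gcd n i) := by
      calc (Nat.gcd n j * u) * (n / Nat.gcd n i)
          = Nat.gcd n j * ((n / Nat.gcd n i) * u) := by ring
        _ = Nat.gcd n j * (n / Nat.gcd n j) := by rw [← hu]
        _ = n := hsj
        _ = Nat.gcd n i * (n / Nat.gcd n i) := hsi.symm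
    exact (Nat.eq_of_mul_eq_mul_right hsipos key).symm
  have hji' : Nat.gcd n j ∣ i := hji.trans (Nat.gcd_dvd_right n i)
  -- c ^ gcd n j ∈ zpowers (c ^ j)
  have hbez : c ^ (Nat.gcd n j) ∈ Subgroup.zpowers (c ^ j) := by
    have : ((Nat.gcd n j : ℤ)) = n * Nat.gcdA n j + j * Nat.gcdB n j :=
      Nat.gcd_eq_gcd_ab n j
    refine ⟨Nat.gcdB n j, ?_⟩
    have hc : c ^ (Nat.gcd n j : ℤ) = (c ^ (n : ℤ)) ^ (Nat.gcdA n j) *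
        (c ^ (j : ℤ)) ^ (Nat.gcdB n j) := by
      rw [← zpow_mul, ← zpow_mul, ← zpow_add, ← this]
    have hcn : c ^ (n : ℤ) = 1 := by
      rw [zpow_natCast]; exact pow_orderOf_eq_one c
    rw [hcn, one_zpow, one_mul] at hc
    show (c ^ j) ^ (Nat.gcdB n j) = c ^ Nat.gcd n j
    rw [← zpow_natCast c j, ← hc, zpow_natCast]
  obtain ⟨u, hu⟩ := hji'
  have : c ^ i = (c ^ Nat.gcd n j) ^ u := by rw [← pow_mul, ← hu]
  show c ^ i ∈ Subgroup.zpowers (c ^ j)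
  rw [this]
  exact Subgroup.pow_mem _ hbez u

/-- Key construction: if `g ∈ ⟨c⟩`, `s` is a prime dividing `orderOf g`, `r` is a prime
different from `s` whose multiplicity in `orderOf c` exceeds that in `orderOf g`,
then `g` is not isolated. -/
lemma exists_diffAdj {g c : G} (hg : g ∈ Subgroup.zpowers c) {r s : ℕ}
    (hr : r.Prime) (hs : s.Prime) (hrs : s ≠ r) (hsd : s ∣ orderOf g)
    (hv : (orderOf g).factorization r < (orderOf c).factorization r) :
    ∃ h : G, diffAdj g h := by
  set d := orderOf g with hd
  set n := orderOf c with hn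
  have hd0 : d ≠ 0 := (isOfFinOrder_of_finite g).orderOf_pos.ne'
  have hn0 : n ≠ 0 := (isOfFinOrder_of_finite c).orderOf_pos.ne'
  have hdn : d ∣ n := orderOf_dvd_of_mem_zpowers hg
  set e := r * ordCompl[s] d with he
  have hcompl0 : ordCompl[s] d ≠ 0 := (Nat.ordCompl_pos s hd0).ne'
  have he0 : e ≠ 0 := Nat.mul_ne_zero hr.pos.ne' hcompl0
  -- factorization facts
  have hfe : ∀ t : ℕ, e.factorization t
      = (Finsupp.single r 1) t + ((d.factorization).erase s) t := by
    intro t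
    rw [he, Nat.factorization_mul hr.pos.ne' hcompl0, Nat.factorization_ordCompl,
      hr.factorization]
    rfl
  have heD : e ∣ n := by
    rw [← Nat.factorization_le_iff_dvd he0 hn0]
    intro t
    rw [hfe t]
    rcases eq_or_ne t r with rfl | htr
    · rw [Finsupp.single_eq_same, Finsupp.erase_ne (Ne.symm hrs)]
      omega
    · rw [Finsupp.single_eq_of_ne' (Ne.symm htr)]
      rcases eq_or_ne t s with rfl | hts
      · simp
      · rw [Finsupp.erase_ne hts]
        simpa using (Nat.factorization_le_iff_dvd hd0 hn0).mpr hdn t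
  have hde : ¬ d ∣ e := by
    intro hcon
    have := ((Nat.factorization_le_iff_dvd hd0 he0).mpr hcon) s
    rw [hfe s, Finsupp.single_eq_of_ne' (Ne.symm hrs), Finsupp.erase_same] at this
    have hpos := hs.factorization_pos_of_dvd hd0 hsd
    omega
  have hed : ¬ e ∣ d := by
    intro hcon
    have := ((Nat.factorization_le_iff_dvd he0 hd0).mpr hcon) r
    rw [hfe r, Finsupp.single_eq_same, Finsupp.erase_ne (Ne.symm hrs)] at this
    omega
  -- the element h = c ^ (n / e)
  refine ⟨c ^ (n / e), ⟨⟨?_, c, hg, ?_⟩, ?_⟩⟩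
  · intro hcon
    apply hde
    rw [hd, hcon, orderOf_pow c, ← hn, Nat.gcd_eq_right (Nat.div_dvd_of_dvd heD),
      Nat.div_div_self heD hn0]
  · exact ⟨(n / e : ℤ), zpow_natCast c (n / e)⟩
  · rintro ⟨-, hmem | hmem⟩
    · apply hde
      have := orderOf_dvd_of_mem_zpowers hmem
      rwa [orderOf_pow c, ← hn, Nat.gcd_eq_right (Nat.div_dvd_of_dvd heD),
        Nat.div_div_self heD hn0, ← hd] at this
    · apply hed
      have := orderOf_dvd_of_mem_zpowers hmem
      rwa [orderOf_pow c, ← hn, Nat.gcd_eq_right (Nat.div_dvd_of_dvd heD),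
        Nat.div_div_self heD hn0, ← hd] at this

end aux

/-- Let G be a non-trivial finite group and let g ∈ G be a non-identity
element. Then g is an isolated vertex of the graph P_E(G) − P(G) (equivalently, g is
not a vertex of D(G)) if and only if either ⟨g⟩ is a maximal cyclic subgroup of G, or
every cyclic subgroup of G containing g has prime-power order. -/
theorem isolated_iff_maximalCyclic_or_primePow {G : Type*} [Group G] [Finite G]
    [Nontrivial G] (g : G) (hg : g ≠ 1) :
    (∀ h : G, ¬ diffAdj g h) ↔
      (IsMaximalCyclic (Subgroup.zpowers g) ∨
        ∀ H : Subgroup G, IsCyclic H → g ∈ H → IsPrimePow (Nat.card H)) := by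
  constructor
  · intro hiso
    by_cases hmax : IsMaximalCyclic (Subgroup.zpowers g)
    · exact Or.inl hmax
    right
    intro H hHc hgH
    by_contra hnp
    obtain ⟨c, hcH, rfl⟩ := zpowers_of_isCyclic H hHc
    rw [Nat.card_zpowers] at hnp
    set n := orderOf c with hn
    set d := orderOf g with hd
    have hgc : g ∈ Subgroup.zpowers c := hgH
    have hd0 : d ≠ 0 := (isOfFinOrder_of_finite g).orderOf_pos.ne'
    have hn0 : n ≠ 0 := (isOfFinOrder_of_finite c).orderOf_pos.ne'
    have hd1 : 1 < d := by
      rcases Nat.lt_or_ge 1 d with h | h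
      · exact h
      · interval_cases d
        · omega
        · exact absurd (orderOf_eq_one_iff.mp hd.symm) hg
    have hdn : d ∣ n := orderOf_dvd_of_mem_zpowers hgc
    have hn1 : 1 < n := lt_of_lt_of_le hd1 (Nat.le_of_dvd (Nat.pos_of_ne_zero hn0) hdn)
    by_cases hc1 : ∃ p : ℕ, p.Prime ∧ p ∣ n ∧ ¬ p ∣ d
    · obtain ⟨p, hp, hpn, hpd⟩ := hc1
      obtain ⟨q, hq, hqd⟩ := Nat.exists_prime_and_dvd (by omega : d ≠ 1)
      have hqp : q ≠ p := fun h => hpd (h ▸ hqd)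
      obtain ⟨h, hh⟩ := exists_diffAdj hgc hp hq hqp hqd (by
        show d.factorization p < n.factorization p
        have h1 : d.factorization p = 0 := Nat.factorization_eq_zero_of_not_dvd hpd
        have h2 : 0 < n.factorization p := hp.factorization_pos_of_dvd hn0 hpn
        omega)
      exact hiso h hh
    · push_neg at hc1
      -- all primes of n divide d; n has two distinct prime factors
      have hcard : 1 < n.primeFactors.card := by
        rcases Nat.lt_or_ge 1 n.primeFactors.card with h | h
        · exact h
        · interval_cases hcc : n.primeFactors.card
          · rw [Finset.card_eq_zero, Nat.primeFactors_eq_empty] at hcc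
            omega
          · exact absurd (isPrimePow_iff_card_primeFactors_eq_one.mpr hcc) hnp
      obtain ⟨p, hpmem, q, hqmem, hpq⟩ := Finset.one_lt_card.mp hcard
      have hp : p.Prime := Nat.prime_of_mem_primeFactors hpmem
      have hq : q.Prime := Nat.prime_of_mem_primeFactors hqmem
      have hpd : p ∣ d := hc1 p hp (Nat.dvd_of_mem_primeFactors hpmem)
      have hqd : q ∣ d := hc1 q hq (Nat.dvd_of_mem_primeFactors hqmem)
      -- use non-maximality to get K
      rw [IsMaximalCyclic, not_and] at hmax
      have hmax' := hmax (isCyclic_zpowers g)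
      push_neg at hmax'
      obtain ⟨K, hKc, hgK, hne⟩ := hmax'
      obtain ⟨k, hkK, rfl⟩ := zpowers_of_isCyclic K hKc
      set m := orderOf k with hm
      have hm0 : m ≠ 0 := (isOfFinOrder_of_finite k).orderOf_pos.ne'
      have hgk : g ∈ Subgroup.zpowers k := hgK (Subgroup.mem_zpowers g)
      have hdm : d ∣ m := orderOf_dvd_of_mem_zpowers hgk
      have hdnem : d ≠ m := by
        intro hcon
        apply hne
        refine le_antisymm hgK (Subgroup.zpowers_le.mpr ?_)
        exact mem_zpowers_of_orderOf_dvd (Subgroup.mem_zpowers k) hgk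
          (by rw [← hd, ← hm, hcon])
      have hnd : ¬ m ∣ d := fun hcon => hdnem (Nat.dvd_antisymm hdm hcon)
      rw [← Nat.factorization_le_iff_dvd hm0 hd0, Finsupp.le_def] at hnd
      push_neg at hnd
      obtain ⟨r, hrv⟩ := hnd
      have hrm : 0 < m.factorization r := by omega
      have hr : r.Prime := Nat.prime_of_mem_primeFactors
        (by rw [← Nat.support_factorization]; exact Finsupp.mem_support_iff.mpr hrm.ne')
      -- choose s ∈ {p, q} with s ≠ r
      have hdr : d.factorization r < m.factorization r := by omega
      rcases eq_or_ne p r with rfl | hpr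
      · obtain ⟨h, hh⟩ := exists_diffAdj hgk hr hq (fun h => hpq h.symm) hqd hdr
        exact hiso h hh
      · obtain ⟨h, hh⟩ := exists_diffAdj hgk hr hp hpr hpd hdr
        exact hiso h hh
  · rintro (hmax | hpp) h ⟨⟨hne, c, hgc, hhc⟩, hnp⟩
    · apply hnp
      refine ⟨hne, Or.inr ?_⟩
      have := hmax.2 (Subgroup.zpowers c) (isCyclic_zpowers c)
        (Subgroup.zpowers_le.mpr hgc)
      rw [this]
      exact hhc
    · have hppc := hpp (Subgroup.zpowers c) (isCyclic_zpowers c) hgc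
      rw [Nat.card_zpowers] at hppc
      obtain ⟨p, k, hp, hk, hpk⟩ := hppc
      have hp' : p.Prime := hp.nat_prime
      obtain ⟨a, _, ha⟩ := (Nat.dvd_prime_pow hp').mp
        (hpk ▸ orderOf_dvd_of_mem_zpowers hgc)
      obtain ⟨b, _, hb⟩ := (Nat.dvd_prime_pow hp').mp
        (hpk ▸ orderOf_dvd_of_mem_zpowers hhc)
      apply hnp
      refine ⟨hne, ?_⟩
      rcases le_total a b with hab | hab
      · exact Or.inl (mem_zpowers_of_orderOf_dvd hgc hhc
          (by rw [ha, hb]; exact pow_dvd_pow p hab))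
      · exact Or.inr (mem_zpowers_of_orderOf_dvd hhc hgc
          (by rw [ha, hb]; exact pow_dvd_pow p hab))
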